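/- Let (č_k) be positive increasing, (l_k) positive with l_k/č_k increasing, l_0 ≥ č_0, and Σ_{k≥1} 1/l_k =: C_1 < ∞. Define q_k := č_k(1 + Σ_{j=1}^k 1/č_j). Then q_k/l_k ≤ č_1/l_1 + C_1 for all k ≥ 1; in particular q_k/l_k is bounded. -/

import Mathlib

/-- If `č` is positive increasing, `l` positive with `l k / č k` increasing and
`č 0 ≤ l 0`, and `C₁ = ∑_{k≥1} 1/l k < ∞`, then for
`q k = č k (1 + ∑_{j=1}^k 1/č j)` we have `q k / l k ≤ č 1 / l 1 + C₁`. -/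
theorem stmt17 (c l : ℕ → ℝ) (C1 : ℝ)
    (hc : ∀ k, 0 < c k) (hcm : Monotone c)
    (hl : ∀ k, 0 < l k)
    (hratio : Monotone fun k => l k / c k)
    (h0 : c 0 ≤ l 0)
    (hsum : Summable fun k : ℕ => 1 / l (k + 1))
    (hC1 : C1 = ∑' k : ℕ, 1 / l (k + 1)) :
    ∀ k : ℕ, 1 ≤ k →
      (c k * (1 + ∑ j ∈ Finset.Icc 1 k, 1 / c j)) / l k ≤ c 1 / l 1 + C1 := by
  intro k hk
  have hlk := hl k
  have hl1 := hl 1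
  have hck := hc k
  have hc1 := hc 1
  have hrat1 : c k / l k ≤ c 1 / l 1 := by
    have h := hratio hk
    simp only at h
    rw [div_le_div_iff₀ hlk hl1]
    rw [div_le_div_iff₀ hc1 hck] at h
    nlinarith
  have hterm : ∀ j ∈ Finset.Icc 1 k, c k * (1 / c j) / l k ≤ 1 / l j := by
    intro j hj
    rw [Finset.mem_Icc] at hj
    have h := hratio hj.2
    simp only at h
    have hcj := hc j
    have hlj := hl j
    rw [div_le_div_iff₀ hcj hck] at h
    rw [div_le_div_iff₀ hlk hlj]
    rw [mul_one_div]
    rw [div_mul_eq_mul_div, div_le_iff₀ hcj]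
    nlinarith
  have hsumb : ∑ j ∈ Finset.Icc 1 k, (1 : ℝ) / l j ≤ C1 := by
    have heq : ∑ j ∈ Finset.Icc 1 k, (1 : ℝ) / l j
        = ∑ i ∈ Finset.range k, 1 / l (i + 1) := by
      rw [show Finset.Icc 1 k = Finset.Ico 1 (k+1) by rfl, Finset.sum_Ico_eq_sum_range]
      simp [add_comm]
    rw [heq, hC1]
    exact Summable.sum_le_tsum (Finset.range k) (fun i _ => le_of_lt (by exact one_div_pos.mpr (hl (i+1)))) hsum
  have hdistr : (c k * (1 + ∑ j ∈ Finset.Icc 1 k, 1 / c j)) / l k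
      = c k / l k + ∑ j ∈ Finset.Icc 1 k, c k * (1 / c j) / l k := by
    rw [mul_add, mul_one, add_div, Finset.mul_sum, Finset.sum_div]
  rw [hdistr]
  have := Finset.sum_le_sum hterm
  linarith
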